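/- arXiv:1512.08887 — 4 statements merged into one kernel-verified Lean document; each statement's English description precedes it below -/
import Mathlib

section
/- Let R be a p × m random matrix with i.i.d. entries of mean zero, second moment μ₂, fourth moment μ₄, and kurtosis κ = μ₄/μ₂² − 3. Let c_k denote the k-th column of the p × p matrix R Rᵀ. Then E[c_k c_kᵀ] = m μ₂² (κ + m + 1) e_k e_kᵀ + m μ₂² I_{p×p}, where e_k is the k-th canonical basis vector of ℝ^p. -/
open MeasureTheory ProbabilityTheory Matrix

set_option linter.unusedSectionVars false
open MeasureTheory ProbabilityTheory

section Aux
variable {Ω : Type*} [MeasureSpace Ω] [IsProbabilityMeasure (ℙ : Measure Ω)]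
variable {ι : Type*} {X : ι → Ω → ℝ}

lemma my_aux2 (hindep : iIndepFun (m := fun _ : ι => Real.measurableSpace) X ℙ)
    (hm : ∀ q, Measurable (X q)) {q r : ι} (hqr : q ≠ r) (a b : ℕ) :
    ∫ ω, X q ω ^ a * X r ω ^ b ∂ℙ = (∫ ω, X q ω ^ a ∂ℙ) * (∫ ω, X r ω ^ b ∂ℙ) := by
  have h := (hindep.indepFun hqr).comp (φ := fun x : ℝ => x ^ a) (ψ := fun x : ℝ => x ^ b)
    (measurable_id.pow_const a) (measurable_id.pow_const b)
  have h2 := h.integral_mul_eq_mul_integral ((hm q).pow_const a).aestronglyMeasurable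
    ((hm r).pow_const b).aestronglyMeasurable
  simpa [Function.comp_def] using h2

lemma my_aux3 (hindep : iIndepFun (m := fun _ : ι => Real.measurableSpace) X ℙ)
    (hm : ∀ q, Measurable (X q)) {q r s : ι} (hqr : q ≠ r) (hqs : q ≠ s) (hrs : r ≠ s)
    (a b c : ℕ) :
    ∫ ω, X q ω ^ a * X r ω ^ b * X s ω ^ c ∂ℙ
      = (∫ ω, X q ω ^ a ∂ℙ) * (∫ ω, X r ω ^ b ∂ℙ) * (∫ ω, X s ω ^ c ∂ℙ) := by
  have h := (hindep.indepFun_prodMk hm q r s hqs hrs).comp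
    (φ := fun v : ℝ × ℝ => v.1 ^ a * v.2 ^ b) (ψ := fun x : ℝ => x ^ c)
    ((measurable_fst.pow_const a).mul (measurable_snd.pow_const b)) (measurable_id.pow_const c)
  have h2 := h.integral_mul_eq_mul_integral
    (((hm q).pow_const a).mul ((hm r).pow_const b)).aestronglyMeasurable
    ((hm s).pow_const c).aestronglyMeasurable
  simp only [Function.comp_def, Pi.mul_apply] at h2
  rw [h2, my_aux2 hindep hm hqr a b]

lemma my_aux4 (hindep : iIndepFun (m := fun _ : ι => Real.measurableSpace) X ℙ)
    (hm : ∀ q, Measurable (X q)) {q r s t : ι} (hqr : q ≠ r) (hst : s ≠ t)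
    (hqs : q ≠ s) (hqt : q ≠ t) (hrs : r ≠ s) (hrt : r ≠ t) (a b c d : ℕ) :
    ∫ ω, X q ω ^ a * X r ω ^ b * (X s ω ^ c * X t ω ^ d) ∂ℙ
      = (∫ ω, X q ω ^ a ∂ℙ) * (∫ ω, X r ω ^ b ∂ℙ)
        * ((∫ ω, X s ω ^ c ∂ℙ) * (∫ ω, X t ω ^ d ∂ℙ)) := by
  have h := (hindep.indepFun_prodMk_prodMk hm q r s t hqs hqt hrs hrt).comp
    (φ := fun v : ℝ × ℝ => v.1 ^ a * v.2 ^ b) (ψ := fun v : ℝ × ℝ => v.1 ^ c * v.2 ^ d)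
    ((measurable_fst.pow_const a).mul (measurable_snd.pow_const b))
    ((measurable_fst.pow_const c).mul (measurable_snd.pow_const d))
  have h2 := h.integral_mul_eq_mul_integral
    (((hm q).pow_const a).mul ((hm r).pow_const b)).aestronglyMeasurable
    (((hm s).pow_const c).mul ((hm t).pow_const d)).aestronglyMeasurable
  simp only [Function.comp_def, Pi.mul_apply] at h2
  rw [h2, my_aux2 hindep hm hqr a b, my_aux2 hindep hm hst c d]

lemma my_mem2 {f g : Ω → ℝ} (hf : MemLp f 4 ℙ) (hg : MemLp g 4 ℙ) :
    MemLp (fun ω => f ω * g ω) 2 ℙ := by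
  have e : (1:ENNReal)/2 = 1/4 + 1/4 := by
    rw [ENNReal.div_add_div_same,
      ENNReal.div_eq_div_iff (by norm_num) (by norm_num) (by norm_num) (by norm_num)]
    norm_num
  simpa [Pi.smul_apply, smul_eq_mul, Pi.mul_def] using hg.smul hf (r := 2) (hpqr := ⟨by simpa [one_div] using e.symm⟩)

lemma my_int1 {f g : Ω → ℝ} (hf : MemLp f 2 ℙ) (hg : MemLp g 2 ℙ) :
    Integrable (fun ω => f ω * g ω) ℙ := by
  have e : (1:ENNReal)/1 = 1/2 + 1/2 := by
    rw [ENNReal.div_add_div_same,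
      ENNReal.div_eq_div_iff (by norm_num) (by norm_num) (by norm_num) (by norm_num)]
    norm_num
  refine memLp_one_iff_integrable.mp ?_
  simpa [Pi.smul_apply, smul_eq_mul, Pi.mul_def] using hg.smul hf (r := 1) (hpqr := ⟨by simpa [one_div] using e.symm⟩)

end Aux


/-- For a `p × m` random matrix `R` with i.i.d. mean-zero entries with
second moment `μ2 > 0`, fourth moment `μ4`, and kurtosis `κ = μ4/μ2² − 3`, the `k`-th
column `c_k` of `R Rᵀ` satisfies
`E[c_k c_kᵀ] = m μ2² (κ + m + 1) e_k e_kᵀ + m μ2² I`. -/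
theorem expectation_column_outer_self
    {Ω : Type*} [MeasureSpace Ω] [IsProbabilityMeasure (ℙ : Measure Ω)]
    {p m : ℕ} (R : Ω → Matrix (Fin p) (Fin m) ℝ)
    (hmeas : ∀ i j, Measurable (fun ω => R ω i j))
    (hindep : iIndepFun (m := fun _ : Fin p × Fin m => Real.measurableSpace)
      (fun q ω => R ω q.1 q.2) ℙ)
    (hid : ∀ i j i' j', IdentDistrib (fun ω => R ω i j) (fun ω => R ω i' j') ℙ ℙ)
    (hL4 : ∀ i j, MemLp (fun ω => R ω i j) 4 ℙ)
    (μ2 μ4 κ : ℝ) (hμ2 : 0 < μ2) (hκ : κ = μ4 / μ2 ^ 2 - 3)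
    (hmean : ∀ i j, ∫ ω, R ω i j ∂ℙ = 0)
    (h2 : ∀ i j, ∫ ω, (R ω i j) ^ 2 ∂ℙ = μ2)
    (h4 : ∀ i j, ∫ ω, (R ω i j) ^ 4 ∂ℙ = μ4)
    (k : Fin p) :
    (Matrix.of fun i l => ∫ ω, (R ω * (R ω)ᵀ) i k * (R ω * (R ω)ᵀ) l k ∂ℙ)
      = ((m : ℝ) * μ2 ^ 2 * (κ + m + 1)) • Matrix.single k k (1 : ℝ)
        + ((m : ℝ) * μ2 ^ 2) • (1 : Matrix (Fin p) (Fin p) ℝ) := by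
  classical
  have hmX : ∀ q : Fin p × Fin m, Measurable fun ω => R ω q.1 q.2 := fun q => hmeas q.1 q.2
  have hint : ∀ (a c : Fin p) (b : Fin m) (e g : Fin p) (f : Fin m),
      Integrable (fun ω => R ω a b * R ω c b * (R ω e f * R ω g f)) ℙ := fun a c b e g f =>
    my_int1 (my_mem2 (hL4 a b) (hL4 c b)) (my_mem2 (hL4 e f) (hL4 g f))
  ext i l
  simp only [Matrix.of_apply, Matrix.mul_apply, Matrix.transpose_apply, Matrix.add_apply,
    Matrix.smul_apply, Matrix.one_apply, Matrix.single, smul_eq_mul]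
  have key : (∫ ω, (∑ j, R ω i j * R ω k j) * ∑ j', R ω l j' * R ω k j' ∂ℙ)
      = ∑ j, ∑ j', ∫ ω, R ω i j * R ω k j * (R ω l j' * R ω k j') ∂ℙ := by
    rw [show (fun ω => (∑ j, R ω i j * R ω k j) * ∑ j', R ω l j' * R ω k j')
        = fun ω => ∑ j, ∑ j', R ω i j * R ω k j * (R ω l j' * R ω k j') from
      funext fun ω => by rw [Finset.sum_mul_sum]]
    rw [integral_finset_sum _ fun j _ => integrable_finset_sum _ fun j' _ => hint i k j l k j']
    exact Finset.sum_congr rfl fun j _ => integral_finset_sum _ fun j' _ => hint i k j l k j'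
  rw [key]
  by_cases hik : i = k
  · subst hik
    by_cases hlk : l = i
    · subst hlk
      simp only [if_pos (⟨rfl, rfl⟩ : l = l ∧ l = l), if_pos rfl, and_self, if_true, mul_one]
      have hterm : ∀ j j' : Fin m, (∫ ω, R ω l j * R ω l j * (R ω l j' * R ω l j') ∂ℙ)
          = μ2 ^ 2 + if j = j' then μ4 - μ2 ^ 2 else 0 := by
        intro j j'
        by_cases h : j = j'
        · subst h
          rw [if_pos rfl, show (fun ω => R ω l j * R ω l j * (R ω l j * R ω l j))
              = fun ω => R ω l j ^ 4 from funext fun ω => by ring, h4]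
          ring
        · rw [if_neg h, add_zero]
          have hx := my_aux2 (X := fun (q : Fin p × Fin m) ω => R ω q.1 q.2) hindep hmX
            (q := (l, j)) (r := (l, j')) (by simp [Prod.ext_iff, h]) 2 2
          simp only at hx
          rw [show (fun ω => R ω l j * R ω l j * (R ω l j' * R ω l j'))
              = fun ω => R ω l j ^ 2 * R ω l j' ^ 2 from funext fun ω => by ring, hx, h2, h2]
          ring
      rw [Finset.sum_congr rfl fun j _ => Finset.sum_congr rfl fun j' _ => hterm j j']
      simp only [Finset.sum_add_distrib, Finset.sum_ite_eq, Finset.mem_univ, if_true,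
        Finset.sum_const, Finset.card_univ, Fintype.card_fin, nsmul_eq_mul]
      rw [hκ]
      field_simp
      ring
    · -- i = k, l ≠ k : entry is 0
      rw [if_neg (fun hc : i = i ∧ i = l => hlk hc.2.symm),
        if_neg (fun hc : i = l => hlk hc.symm), mul_zero, mul_zero, add_zero]
      refine Finset.sum_eq_zero fun j _ => Finset.sum_eq_zero fun j' _ => ?_
      by_cases h : j = j'
      · subst h
        have hx := my_aux2 (X := fun (q : Fin p × Fin m) ω => R ω q.1 q.2) hindep hmX
          (q := (i, j)) (r := (l, j)) (fun hc => hlk (congrArg Prod.fst hc).symm) 3 1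
        simp only at hx
        rw [show (fun ω => R ω i j * R ω i j * (R ω l j * R ω i j))
            = fun ω => R ω i j ^ 3 * R ω l j ^ 1 from funext fun ω => by ring, hx]
        rw [show (fun ω => R ω l j ^ 1) = fun ω => R ω l j from funext fun ω => by ring, hmean]
        ring
      · have hx := my_aux3 (X := fun (q : Fin p × Fin m) ω => R ω q.1 q.2) hindep hmX
          (q := (i, j)) (r := (l, j')) (s := (i, j'))
          (fun hc => hlk (congrArg Prod.fst hc).symm)
          (by simp [Prod.ext_iff, h]) (fun hc => hlk (congrArg Prod.fst hc))
          2 1 1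
        simp only at hx
        rw [show (fun ω => R ω i j * R ω i j * (R ω l j' * R ω i j'))
            = fun ω => R ω i j ^ 2 * R ω l j' ^ 1 * R ω i j' ^ 1 from funext fun ω => by ring, hx]
        rw [show (fun ω => R ω l j' ^ 1) = fun ω => R ω l j' from funext fun ω => by ring, hmean]
        ring
  · by_cases hlk : l = k
    · subst hlk
      rw [if_neg (fun hc : l = i ∧ l = l => hik hc.1.symm), if_neg (fun hc : i = l => hik hc),
        mul_zero, mul_zero, add_zero]
      refine Finset.sum_eq_zero fun j _ => Finset.sum_eq_zero fun j' _ => ?_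
      by_cases h : j = j'
      · subst h
        have hx := my_aux2 (X := fun (q : Fin p × Fin m) ω => R ω q.1 q.2) hindep hmX
          (q := (i, j)) (r := (l, j)) (by simp [Prod.ext_iff, hik]) 1 3
        simp only at hx
        rw [show (fun ω => R ω i j * R ω l j * (R ω l j * R ω l j))
            = fun ω => R ω i j ^ 1 * R ω l j ^ 3 from funext fun ω => by ring, hx]
        rw [show (fun ω => R ω i j ^ 1) = fun ω => R ω i j from funext fun ω => by ring, hmean]
        ring
      · have hx := my_aux3 (X := fun (q : Fin p × Fin m) ω => R ω q.1 q.2) hindep hmX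
          (q := (i, j)) (r := (l, j)) (s := (l, j'))
          (by simp [Prod.ext_iff, hik]) (by simp [Prod.ext_iff, hik]) (by simp [Prod.ext_iff, h])
          1 1 2
        simp only at hx
        rw [show (fun ω => R ω i j * R ω l j * (R ω l j' * R ω l j'))
            = fun ω => R ω i j ^ 1 * R ω l j ^ 1 * R ω l j' ^ 2 from funext fun ω => by ring, hx]
        rw [show (fun ω => R ω i j ^ 1) = fun ω => R ω i j from funext fun ω => by ring, hmean]
        ring
    · by_cases hil : i = l
      · subst hil
        rw [if_neg (fun hc : k = i ∧ k = i => hik hc.1.symm), if_pos rfl, mul_zero, mul_one,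
          zero_add]
        have hterm : ∀ j j' : Fin m, (∫ ω, R ω i j * R ω k j * (R ω i j' * R ω k j') ∂ℙ)
            = if j = j' then μ2 ^ 2 else 0 := by
          intro j j'
          by_cases h : j = j'
          · subst h
            rw [if_pos rfl]
            have hx := my_aux2 (X := fun (q : Fin p × Fin m) ω => R ω q.1 q.2) hindep hmX
              (q := (i, j)) (r := (k, j)) (by simp [Prod.ext_iff, hik]) 2 2
            simp only at hx
            rw [show (fun ω => R ω i j * R ω k j * (R ω i j * R ω k j))
                = fun ω => R ω i j ^ 2 * R ω k j ^ 2 from funext fun ω => by ring, hx, h2, h2]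
            ring
          · rw [if_neg h]
            have hx := my_aux4 (X := fun (q : Fin p × Fin m) ω => R ω q.1 q.2) hindep hmX
              (q := (i, j)) (r := (k, j)) (s := (i, j')) (t := (k, j'))
              (by simp [Prod.ext_iff, hik]) (by simp [Prod.ext_iff, hik])
              (by simp [Prod.ext_iff, h]) (by simp [Prod.ext_iff, hik])
              (fun hc => hik (congrArg Prod.fst hc).symm)
              (by simp [Prod.ext_iff, h]) 1 1 1 1
            simp only at hx
            rw [show (fun ω => R ω i j * R ω k j * (R ω i j' * R ω k j'))
                = fun ω => R ω i j ^ 1 * R ω k j ^ 1 * (R ω i j' ^ 1 * R ω k j' ^ 1) from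
              funext fun ω => by ring, hx]
            rw [show (fun ω => R ω i j ^ 1) = fun ω => R ω i j from funext fun ω => by ring, hmean]
            ring
        rw [Finset.sum_congr rfl fun j _ => Finset.sum_congr rfl fun j' _ => hterm j j']
        simp only [Finset.sum_ite_eq, Finset.mem_univ, if_true, Finset.sum_const,
          Finset.card_univ, Fintype.card_fin, nsmul_eq_mul]
      · rw [if_neg (fun hc : k = i ∧ k = l => hik hc.1.symm), if_neg hil, mul_zero, mul_zero,
          add_zero]
        refine Finset.sum_eq_zero fun j _ => Finset.sum_eq_zero fun j' _ => ?_
        by_cases h : j = j'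
        · subst h
          have hx := my_aux3 (X := fun (q : Fin p × Fin m) ω => R ω q.1 q.2) hindep hmX
            (q := (i, j)) (r := (l, j)) (s := (k, j))
            (by simp [Prod.ext_iff, hil]) (by simp [Prod.ext_iff, hik])
            (by simp [Prod.ext_iff, hlk]) 1 1 2
          simp only at hx
          rw [show (fun ω => R ω i j * R ω k j * (R ω l j * R ω k j))
              = fun ω => R ω i j ^ 1 * R ω l j ^ 1 * R ω k j ^ 2 from funext fun ω => by ring, hx]
          rw [show (fun ω => R ω i j ^ 1) = fun ω => R ω i j from funext fun ω => by ring, hmean]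
          ring
        · have hx := my_aux4 (X := fun (q : Fin p × Fin m) ω => R ω q.1 q.2) hindep hmX
            (q := (i, j)) (r := (k, j)) (s := (l, j')) (t := (k, j'))
            (by simp [Prod.ext_iff, hik]) (by simp [Prod.ext_iff, hlk])
            (by simp [Prod.ext_iff, hil]) (by simp [Prod.ext_iff, hik])
            (fun hc => hlk (congrArg Prod.fst hc).symm)
            (by simp [Prod.ext_iff, h]) 1 1 1 1
          simp only at hx
          rw [show (fun ω => R ω i j * R ω k j * (R ω l j' * R ω k j'))
              = fun ω => R ω i j ^ 1 * R ω k j ^ 1 * (R ω l j' ^ 1 * R ω k j' ^ 1) from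
            funext fun ω => by ring, hx]
          rw [show (fun ω => R ω i j ^ 1) = fun ω => R ω i j from funext fun ω => by ring, hmean]
          ring
end

section
/- Let R be a p × m random matrix with i.i.d. entries of mean zero and second moment μ₂, and let c_k denote the k-th column of R Rᵀ. Then for k ≠ l, E[c_k c_lᵀ] = m² μ₂² e_k e_lᵀ + m μ₂² e_l e_kᵀ. -/
open MeasureTheory ProbabilityTheory Matrix

lemma integral_prod_pow_of_iIndepFun {Ω : Type*} [MeasureSpace Ω]
    [IsProbabilityMeasure (ℙ : Measure Ω)] {ι : Type*} (X : ι → Ω → ℝ)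
    (hX : ∀ i, Measurable (X i))
    (hind : iIndepFun X ℙ)
    (e : ι → ℕ) (S : Finset ι) :
    ∫ ω, ∏ q ∈ S, X q ω ^ e q ∂ℙ = ∏ q ∈ S, ∫ ω, X q ω ^ e q ∂ℙ := by
  classical
  induction S using Finset.induction_on with
  | empty => simp
  | @insert i S hi ih =>
    set Y : ι → Ω → ℝ := fun q ω => X q ω ^ e q with hY
    have hYmeas : ∀ q, Measurable (Y q) := fun q => (hX q).pow_const _
    have hYind : iIndepFun Y ℙ :=
      hind.comp (fun q x => x ^ e q) (fun q => measurable_id.pow_const _)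
    have hsep : IndepFun (∏ j ∈ S, Y j) (Y i) ℙ :=
      hYind.indepFun_finsetProd_of_notMem hYmeas hi
    rw [Finset.prod_insert hi]
    have heq : (∫ ω, ∏ q ∈ insert i S, X q ω ^ e q ∂ℙ)
        = ∫ ω, (∏ j ∈ S, Y j) ω * Y i ω ∂ℙ := by
      refine integral_congr_ae (Filter.Eventually.of_forall fun ω => ?_)
      simp only [Finset.prod_apply, Finset.prod_insert hi, hY]
      ring
    have hpm : Measurable (∏ j ∈ S, Y j) := by
      have h : (∏ j ∈ S, Y j) = fun ω => ∏ j ∈ S, Y j ω := funext fun ω => by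
        simp [Finset.prod_apply]
      rw [h]; exact Finset.measurable_prod _ fun j _ => hYmeas j
    rw [heq, hsep.integral_fun_mul_eq_mul_integral hpm.aestronglyMeasurable (hYmeas i).aestronglyMeasurable]
    have h2 : (∫ ω, (∏ j ∈ S, Y j) ω ∂ℙ) = ∏ q ∈ S, ∫ ω, X q ω ^ e q ∂ℙ := by
      rw [← ih]
      refine integral_congr_ae (Filter.Eventually.of_forall fun ω => ?_)
      simp [Finset.prod_apply, hY]
    rw [h2]; ring

lemma integral_four_mul {Ω : Type*} [MeasureSpace Ω] [IsProbabilityMeasure (ℙ : Measure Ω)]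
    {ι : Type*} [Fintype ι] [DecidableEq ι] (X : ι → Ω → ℝ)
    (hX : ∀ i, Measurable (X i))
    (hind : iIndepFun X ℙ)
    (q1 q2 q3 q4 : ι) :
    ∫ ω, X q1 ω * X q2 ω * X q3 ω * X q4 ω ∂ℙ
      = ∏ q, ∫ ω, X q ω ^ ((if q = q1 then 1 else 0) + (if q = q2 then 1 else 0)
          + (if q = q3 then 1 else 0) + (if q = q4 then 1 else 0)) ∂ℙ := by
  rw [← integral_prod_pow_of_iIndepFun X hX hind _ Finset.univ]
  refine integral_congr_ae (Filter.Eventually.of_forall fun ω => ?_)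
  simp only [pow_add, Finset.prod_mul_distrib, pow_ite, pow_one, pow_zero,
    Finset.prod_ite_eq', Finset.mem_univ, if_true]

lemma integral_four_lone {Ω : Type*} [MeasureSpace Ω] [IsProbabilityMeasure (ℙ : Measure Ω)]
    {ι : Type*} [Fintype ι] [DecidableEq ι] (X : ι → Ω → ℝ)
    (hX : ∀ i, Measurable (X i))
    (hind : iIndepFun X ℙ)
    (q1 q2 q3 q4 : ι) (h12 : q1 ≠ q2) (h13 : q1 ≠ q3) (h14 : q1 ≠ q4)
    (h0 : ∫ ω, X q1 ω ∂ℙ = 0) :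
    ∫ ω, X q1 ω * X q2 ω * X q3 ω * X q4 ω ∂ℙ = 0 := by
  rw [integral_four_mul X hX hind q1 q2 q3 q4]
  refine Finset.prod_eq_zero (Finset.mem_univ q1) ?_
  simp [h12, h13, h14, h0]

lemma integral_sq_mul_sq {Ω : Type*} [MeasureSpace Ω]
    {ι : Type*} (X : ι → Ω → ℝ)
    (hX : ∀ i, Measurable (X i))
    (hind : iIndepFun X ℙ)
    (qA qB : ι) (h : qA ≠ qB) :
    ∫ ω, X qA ω ^ 2 * X qB ω ^ 2 ∂ℙ = (∫ ω, X qA ω ^ 2 ∂ℙ) * ∫ ω, X qB ω ^ 2 ∂ℙ := by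
  have hsep : IndepFun (fun ω => X qA ω ^ 2) (fun ω => X qB ω ^ 2) ℙ :=
    (hind.indepFun h).comp (measurable_id.pow_const 2) (measurable_id.pow_const 2)
  exact hsep.integral_fun_mul_eq_mul_integral ((hX qA).pow_const 2).aestronglyMeasurable
    ((hX qB).pow_const 2).aestronglyMeasurable


/-- For a `p × m` random matrix `R` with i.i.d. mean-zero entries with
second moment `μ2` and finite fourth moment, and `c_k` the `k`-th column of `R Rᵀ`,
for `k ≠ l` we have `E[c_k c_lᵀ] = m² μ2² e_k e_lᵀ + m μ2² e_l e_kᵀ`. -/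
theorem expectation_column_outer_distinct
    {Ω : Type*} [MeasureSpace Ω] [IsProbabilityMeasure (ℙ : Measure Ω)]
    {p m : ℕ} (R : Ω → Matrix (Fin p) (Fin m) ℝ)
    (hmeas : ∀ i j, Measurable (fun ω => R ω i j))
    (hindep : iIndepFun
      (fun (q : Fin p × Fin m) ω => R ω q.1 q.2) ℙ)
    (hid : ∀ i j i' j', IdentDistrib (fun ω => R ω i j) (fun ω => R ω i' j') ℙ ℙ)
    (hL4 : ∀ i j, MemLp (fun ω => R ω i j) 4 ℙ)
    (μ2 : ℝ)
    (hmean : ∀ i j, ∫ ω, R ω i j ∂ℙ = 0)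
    (h2 : ∀ i j, ∫ ω, (R ω i j) ^ 2 ∂ℙ = μ2)
    (k l : Fin p) (hkl : k ≠ l) :
    (Matrix.of fun i j => ∫ ω, (R ω * (R ω)ᵀ) i k * (R ω * (R ω)ᵀ) j l ∂ℙ)
      = ((m : ℝ) ^ 2 * μ2 ^ 2) • Matrix.single k l (1 : ℝ)
        + ((m : ℝ) * μ2 ^ 2) • Matrix.single l k (1 : ℝ) := by
  classical
  have hXmeas : ∀ q : Fin p × Fin m, Measurable (fun ω => R ω q.1 q.2) :=
    fun q => hmeas q.1 q.2
  -- value of a single term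
  have hT : ∀ (i j : Fin p) (a b : Fin m),
      (∫ ω, R ω i a * R ω k a * (R ω j b * R ω l b) ∂ℙ)
        = (if i = k ∧ j = l then μ2 ^ 2 else 0)
          + (if a = b ∧ i = l ∧ j = k then μ2 ^ 2 else 0) := by
    intro i j a b
    by_cases hik : i = k
    · by_cases hjl : j = l
      · rw [hik, hjl]
        have e1 : (∫ ω, R ω k a * R ω k a * (R ω l b * R ω l b) ∂ℙ)
            = ∫ ω, R ω k a ^ 2 * R ω l b ^ 2 ∂ℙ :=
          integral_congr_ae (Filter.Eventually.of_forall fun ω => by ring)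
        have e2 : (∫ ω, R ω k a ^ 2 * R ω l b ^ 2 ∂ℙ)
            = (∫ ω, R ω k a ^ 2 ∂ℙ) * ∫ ω, R ω l b ^ 2 ∂ℙ :=
          integral_sq_mul_sq (fun q ω => R ω q.1 q.2) hXmeas hindep (k, a) (l, b)
            (fun h => hkl (congrArg Prod.fst h))
        rw [e1, e2, h2, h2]
        simp [hkl]
        ring
      · -- j ≠ l : (l,b) is lone
        rw [hik]
        have e0 : (∫ ω, R ω l b * R ω k a * R ω k a * R ω j b ∂ℙ) = 0 :=
          integral_four_lone (fun q ω => R ω q.1 q.2) hXmeas hindep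
            (l, b) (k, a) (k, a) (j, b)
            (fun h => hkl (congrArg Prod.fst h).symm)
            (fun h => hkl (congrArg Prod.fst h).symm)
            (fun h => hjl (congrArg Prod.fst h).symm)
            (hmean l b)
        have e1 : (∫ ω, R ω k a * R ω k a * (R ω j b * R ω l b) ∂ℙ)
            = ∫ ω, R ω l b * R ω k a * R ω k a * R ω j b ∂ℙ :=
          integral_congr_ae (Filter.Eventually.of_forall fun ω => by ring)
        rw [e1, e0]
        simp [hjl, fun h : k = l => hkl h]
    · by_cases hil : i = l
      · by_cases hjk : j = k
        · by_cases hab : a = b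
          · rw [hil, hjk, hab]
            have e1 : (∫ ω, R ω l b * R ω k b * (R ω k b * R ω l b) ∂ℙ)
                = ∫ ω, R ω k b ^ 2 * R ω l b ^ 2 ∂ℙ :=
              integral_congr_ae (Filter.Eventually.of_forall fun ω => by ring)
            have e2 : (∫ ω, R ω k b ^ 2 * R ω l b ^ 2 ∂ℙ)
                = (∫ ω, R ω k b ^ 2 ∂ℙ) * ∫ ω, R ω l b ^ 2 ∂ℙ :=
              integral_sq_mul_sq (fun q ω => R ω q.1 q.2) hXmeas hindep (k, b) (l, b)
                (fun h => hkl (congrArg Prod.fst h))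
            rw [e1, e2, h2, h2]
            simp [hkl, Ne.symm hkl]
            ring
          · -- a ≠ b : (l,a) is lone
            rw [hil, hjk]
            have e0 : (∫ ω, R ω l a * R ω k a * R ω k b * R ω l b ∂ℙ) = 0 :=
              integral_four_lone (fun q ω => R ω q.1 q.2) hXmeas hindep
                (l, a) (k, a) (k, b) (l, b)
                (fun h => hkl (congrArg Prod.fst h).symm)
                (fun h => hkl (congrArg Prod.fst h).symm)
                (fun h => hab (congrArg Prod.snd h))
                (hmean l a)
            have e1 : (∫ ω, R ω l a * R ω k a * (R ω k b * R ω l b) ∂ℙ)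
                = ∫ ω, R ω l a * R ω k a * R ω k b * R ω l b ∂ℙ :=
              integral_congr_ae (Filter.Eventually.of_forall fun ω => by ring)
            rw [e1, e0]
            simp [hab, Ne.symm hkl]
        · -- i = l, j ≠ k : (k,a) is lone
          rw [hil]
          have e0 : (∫ ω, R ω k a * R ω l a * R ω j b * R ω l b ∂ℙ) = 0 :=
            integral_four_lone (fun q ω => R ω q.1 q.2) hXmeas hindep
              (k, a) (l, a) (j, b) (l, b)
              (fun h => hkl (congrArg Prod.fst h))
              (fun h => hjk (congrArg Prod.fst h).symm)
              (fun h => hkl (congrArg Prod.fst h))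
              (hmean k a)
          have e1 : (∫ ω, R ω l a * R ω k a * (R ω j b * R ω l b) ∂ℙ)
              = ∫ ω, R ω k a * R ω l a * R ω j b * R ω l b ∂ℙ :=
            integral_congr_ae (Filter.Eventually.of_forall fun ω => by ring)
          rw [e1, e0]
          simp [hjk, Ne.symm hkl]
      · -- i ∉ {k, l}
        by_cases hijab : i = j ∧ a = b
        · obtain ⟨hij, hab⟩ := hijab
          rw [← hij, ← hab]
          have e0 : (∫ ω, R ω k a * R ω i a * R ω i a * R ω l a ∂ℙ) = 0 :=
            integral_four_lone (fun q ω => R ω q.1 q.2) hXmeas hindep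
              (k, a) (i, a) (i, a) (l, a)
              (fun h => hik (congrArg Prod.fst h).symm)
              (fun h => hik (congrArg Prod.fst h).symm)
              (fun h => hkl (congrArg Prod.fst h))
              (hmean k a)
          have e1 : (∫ ω, R ω i a * R ω k a * (R ω i a * R ω l a) ∂ℙ)
              = ∫ ω, R ω k a * R ω i a * R ω i a * R ω l a ∂ℙ :=
            integral_congr_ae (Filter.Eventually.of_forall fun ω => by ring)
          rw [e1, e0]
          simp [hik, hil]
        · -- (i,a) is lone
          have e0 : (∫ ω, R ω i a * R ω k a * R ω j b * R ω l b ∂ℙ) = 0 :=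
            integral_four_lone (fun q ω => R ω q.1 q.2) hXmeas hindep
              (i, a) (k, a) (j, b) (l, b)
              (fun h => hik (congrArg Prod.fst h))
              (fun h => hijab ⟨congrArg Prod.fst h, congrArg Prod.snd h⟩)
              (fun h => hil (congrArg Prod.fst h))
              (hmean i a)
          have e1 : (∫ ω, R ω i a * R ω k a * (R ω j b * R ω l b) ∂ℙ)
              = ∫ ω, R ω i a * R ω k a * R ω j b * R ω l b ∂ℙ :=
            integral_congr_ae (Filter.Eventually.of_forall fun ω => by ring)
          rw [e1, e0]
          simp [hik, hil]
  -- integrability of a single term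
  have hint : ∀ (i j : Fin p) (a b : Fin m),
      Integrable (fun ω => R ω i a * R ω k a * (R ω j b * R ω l b)) ℙ := by
    intro i j a b
    have h14 : (1 : ENNReal) / 2 = 1 / 4 + 1 / 4 := by
      rw [ENNReal.div_add_div_same, ENNReal.div_eq_div_iff] <;> norm_num
    have h12 : (1 : ENNReal) / 1 = 1 / 2 + 1 / 2 := by
      rw [ENNReal.div_add_div_same, ENNReal.div_eq_div_iff] <;> norm_num
    have hA : MemLp (fun ω => R ω i a * R ω k a) 2 ℙ :=
      (hL4 k a).smul (hL4 i a) (hpqr := ⟨by simpa only [one_div] using h14.symm⟩)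
    have hB : MemLp (fun ω => R ω j b * R ω l b) 2 ℙ :=
      (hL4 l b).smul (hL4 j b) (hpqr := ⟨by simpa only [one_div] using h14.symm⟩)
    have hAB : MemLp (fun ω => R ω i a * R ω k a * (R ω j b * R ω l b)) 1 ℙ :=
      hB.smul hA (hpqr := ⟨by simpa [one_div] using h12.symm⟩)
    exact memLp_one_iff_integrable.mp hAB
  ext i j
  have expand : (∫ ω, (R ω * (R ω)ᵀ) i k * (R ω * (R ω)ᵀ) j l ∂ℙ)
      = ∑ a : Fin m, ∑ b : Fin m, ∫ ω, R ω i a * R ω k a * (R ω j b * R ω l b) ∂ℙ := by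
    have h1 : (fun ω => (R ω * (R ω)ᵀ) i k * (R ω * (R ω)ᵀ) j l)
        = fun ω => ∑ a : Fin m, ∑ b : Fin m, R ω i a * R ω k a * (R ω j b * R ω l b) := by
      funext ω
      simp only [Matrix.mul_apply, Matrix.transpose_apply, Finset.sum_mul_sum]
    rw [show (∫ ω, (R ω * (R ω)ᵀ) i k * (R ω * (R ω)ᵀ) j l ∂ℙ)
        = ∫ ω, ∑ a : Fin m, ∑ b : Fin m, R ω i a * R ω k a * (R ω j b * R ω l b) ∂ℙ from by
      rw [← h1]]
    rw [integral_finset_sum _ fun a _ => integrable_finset_sum _ fun b _ => hint i j a b]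
    exact Finset.sum_congr rfl fun a _ => integral_finset_sum _ fun b _ => hint i j a b
  show (∫ ω, (R ω * (R ω)ᵀ) i k * (R ω * (R ω)ᵀ) j l ∂ℙ) = _
  rw [expand]
  simp_rw [hT i j]
  have hsum : ∀ a : Fin m, (∑ b : Fin m, ((if i = k ∧ j = l then μ2 ^ 2 else 0)
      + (if a = b ∧ i = l ∧ j = k then μ2 ^ 2 else 0)))
      = (m : ℝ) * (if i = k ∧ j = l then μ2 ^ 2 else 0)
        + (if i = l ∧ j = k then μ2 ^ 2 else 0) := by
    intro a
    rw [Finset.sum_add_distrib]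
    congr 1
    · simp [Finset.sum_const, mul_comm]
    · have h3 : (fun b : Fin m => if a = b ∧ i = l ∧ j = k then μ2 ^ 2 else 0)
          = fun b : Fin m => if a = b then (if i = l ∧ j = k then μ2 ^ 2 else 0) else 0 := by
        funext b; by_cases h : a = b <;> simp [h]
      simp_rw [h3]
      simp [Finset.sum_ite_eq]
  simp_rw [hsum]
  rw [Finset.sum_add_distrib]
  simp only [Finset.sum_const, Finset.card_univ, Fintype.card_fin, nsmul_eq_mul,
    Matrix.add_apply, Matrix.smul_apply, Matrix.single, Matrix.of_apply,
    smul_eq_mul]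
  have eP : (k = i ∧ l = j) ↔ (i = k ∧ j = l) :=
    ⟨fun h => ⟨h.1.symm, h.2.symm⟩, fun h => ⟨h.1.symm, h.2.symm⟩⟩
  have eQ : (l = i ∧ k = j) ↔ (i = l ∧ j = k) :=
    ⟨fun h => ⟨h.1.symm, h.2.symm⟩, fun h => ⟨h.1.symm, h.2.symm⟩⟩
  simp only [eP, eQ]
  by_cases hP : i = k ∧ j = l
  · have hQ : ¬ (i = l ∧ j = k) := fun h => hkl (hP.1.symm.trans h.1)
    simp only [if_pos hP, if_neg hQ]
    ring
  · by_cases hQ : i = l ∧ j = k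
    · simp only [if_pos hQ, if_neg hP]
      ring
    · simp only [if_neg hP, if_neg hQ]
      ring
end

section
/- Let R be a p × m random matrix with i.i.d. entries of mean zero, second moment μ₂ > 0, fourth moment μ₄, and kurtosis κ = μ₄/μ₂² − 3. Then for any fixed vector x ∈ ℝ^p, E[R Rᵀ x xᵀ R Rᵀ] = (m² + m) μ₂² x xᵀ + κ m μ₂² diag(x xᵀ) + m μ₂² ‖x‖₂² I_{p×p}, where diag(M) zeroes all off-diagonal entries of M. -/
open MeasureTheory ProbabilityTheory Matrix
open scoped ENNReal

set_option linter.unusedSectionVars false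
set_option maxHeartbeats 1000000

section MomentAux
variable {Ω : Type*} [MeasureSpace Ω] [IsProbabilityMeasure (ℙ : Measure Ω)]
variable {ι : Type*} [DecidableEq ι] {f : ι → Ω → ℝ} {μ2 μ4 : ℝ}

private lemma memLp2_mulX (hL4 : ∀ i, MemLp (f i) 4 ℙ) (i j : ι) :
    MemLp (fun ω => f i ω * f j ω) 2 ℙ := by
  have h : (1:ℝ≥0∞)/2 = 1/4 + 1/4 := by
    simp only [one_div]
    rw [show (4:ℝ≥0∞) = 2*2 by norm_num, ENNReal.mul_inv (by norm_num) (by norm_num)]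
    rw [← two_mul, ← mul_assoc, ENNReal.mul_inv_cancel (by norm_num) (by norm_num), one_mul]
  haveI : ENNReal.HolderTriple 4 4 2 := ⟨by simpa [one_div] using h.symm⟩
  have := (hL4 i).smul (hL4 j) (p := 4) (q := 4) (r := 2)
  simpa [smul_eq_mul, mul_comm, Pi.mul_def] using this

private lemma one_eqX : (1:ℝ≥0∞)/1 = 1/2 + 1/2 := by
  simp only [one_div]; rw [inv_one, ENNReal.inv_two_add_inv_two]

private lemma integrable_mul2X (hL4 : ∀ i, MemLp (f i) 4 ℙ) (i j : ι) :
    Integrable (fun ω => f i ω * f j ω) ℙ :=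
  ((memLp2_mulX hL4 i j).mono_exponent (by norm_num)).integrable le_rfl

private lemma integrable_mul3X (hL4 : ∀ i, MemLp (f i) 4 ℙ) (i j k : ι) :
    Integrable (fun ω => f i ω * f j ω * f k ω) ℙ := by
  have h12 := memLp2_mulX hL4 i j
  have hk : MemLp (f k) 2 ℙ := (hL4 k).mono_exponent (by norm_num)
  haveI : ENNReal.HolderTriple 2 2 1 := ⟨by simpa [one_div] using one_eqX.symm⟩
  have := hk.smul h12 (p := 2) (q := 2) (r := 1)
  have h : MemLp (fun ω => (f i ω * f j ω) * f k ω) 1 ℙ := by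
    simpa [smul_eq_mul, mul_comm, Pi.mul_def] using this
  exact h.integrable le_rfl

private lemma integrable_mul4X (hL4 : ∀ i, MemLp (f i) 4 ℙ) (i j k l : ι) :
    Integrable (fun ω => f i ω * f j ω * f k ω * f l ω) ℙ := by
  have h12 := memLp2_mulX hL4 i j
  have h34 := memLp2_mulX hL4 k l
  haveI : ENNReal.HolderTriple 2 2 1 := ⟨by simpa [one_div] using one_eqX.symm⟩
  have := h34.smul h12 (p := 2) (q := 2) (r := 1)
  have h : MemLp (fun ω => (f i ω * f j ω) * (f k ω * f l ω)) 1 ℙ := by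
    simpa [smul_eq_mul, mul_comm, Pi.mul_def] using this
  exact (h.integrable le_rfl).congr (by filter_upwards with ω; ring)

private lemma indep_triple_singleX
    (hindep : iIndepFun f ℙ)
    (hmeas : ∀ i, Measurable (f i)) {i j k e : ι}
    (hi : i ≠ e) (hj : j ≠ e) (hk : k ≠ e) :
    IndepFun (fun ω => f i ω * f j ω * f k ω) (f e) ℙ := by
  have hST : Disjoint ({i, j, k} : Finset ι) ({e} : Finset ι) := by
    simp [Finset.disjoint_left, hi, hj, hk]
  have h := hindep.indepFun_finset {i, j, k} {e} hST hmeas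
  have hφ : Measurable (fun v : ((q : ({i,j,k} : Finset ι)) → ℝ) =>
      v ⟨i, by simp⟩ * v ⟨j, by simp⟩ * v ⟨k, by simp⟩) := by fun_prop
  have hψ : Measurable (fun v : ((q : ({e} : Finset ι)) → ℝ) => v ⟨e, by simp⟩) := by
    fun_prop
  exact h.comp hφ hψ

private lemma zero_singletonX
    (hindep : iIndepFun f ℙ)
    (hmeas : ∀ i, Measurable (f i)) (hL4 : ∀ i, MemLp (f i) 4 ℙ)
    (hmean : ∀ i, ∫ ω, f i ω ∂ℙ = 0) {i j k e : ι}
    (hi : i ≠ e) (hj : j ≠ e) (hk : k ≠ e) :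
    ∫ ω, f i ω * f j ω * f k ω * f e ω ∂ℙ = 0 := by
  have hInd := indep_triple_singleX hindep hmeas hi hj hk
  have h := hInd.integral_mul_eq_mul_integral (integrable_mul3X hL4 i j k).aestronglyMeasurable
    ((hL4 e).integrable (by norm_num)).aestronglyMeasurable
  calc ∫ ω, f i ω * f j ω * f k ω * f e ω ∂ℙ
      = ∫ ω, ((fun ω => f i ω * f j ω * f k ω) * f e) ω ∂ℙ := rfl
    _ = (∫ ω, f i ω * f j ω * f k ω ∂ℙ) * ∫ ω, f e ω ∂ℙ := h
    _ = 0 := by rw [hmean e, mul_zero]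

private lemma pair_sqX
    (hindep : iIndepFun f ℙ)
    (hmeas : ∀ i, Measurable (f i)) (hL4 : ∀ i, MemLp (f i) 4 ℙ)
    (h2 : ∀ i, ∫ ω, f i ω ^ 2 ∂ℙ = μ2) {i k : ι} (hik : i ≠ k) :
    ∫ ω, (f i ω * f i ω) * (f k ω * f k ω) ∂ℙ = μ2 ^ 2 := by
  have hInd : IndepFun (f i * f i) (f k * f k) ℙ :=
    hindep.indepFun_mul_mul hmeas i i k k hik hik hik hik
  have h := hInd.integral_mul_eq_mul_integral (integrable_mul2X hL4 i i).aestronglyMeasurable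
    (integrable_mul2X hL4 k k).aestronglyMeasurable
  calc ∫ ω, (f i ω * f i ω) * (f k ω * f k ω) ∂ℙ
      = ∫ ω, ((f i * f i) * (f k * f k)) ω ∂ℙ := rfl
    _ = (∫ ω, (f i * f i) ω ∂ℙ) * ∫ ω, (f k * f k) ω ∂ℙ := h
    _ = μ2 ^ 2 := by
        have hi2 : ∫ ω, (f i * f i) ω ∂ℙ = μ2 := by
          rw [← h2 i]; congr 1; funext ω; simp only [Pi.mul_apply]; ring
        have hk2 : ∫ ω, (f k * f k) ω ∂ℙ = μ2 := by
          rw [← h2 k]; congr 1; funext ω; simp only [Pi.mul_apply]; ring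
        rw [hi2, hk2]; ring

private lemma four_momentX
    (hindep : iIndepFun f ℙ)
    (hmeas : ∀ i, Measurable (f i)) (hL4 : ∀ i, MemLp (f i) 4 ℙ)
    (hmean : ∀ i, ∫ ω, f i ω ∂ℙ = 0)
    (h2 : ∀ i, ∫ ω, f i ω ^ 2 ∂ℙ = μ2)
    (h4 : ∀ i, ∫ ω, f i ω ^ 4 ∂ℙ = μ4)
    (a b c d : ι) :
    ∫ ω, f a ω * f b ω * f c ω * f d ω ∂ℙ =
      if a = b ∧ b = c ∧ c = d then μ4
      else if a = b ∧ c = d then μ2 ^ 2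
      else if a = c ∧ b = d then μ2 ^ 2
      else if a = d ∧ b = c then μ2 ^ 2
      else 0 := by
  by_cases hab : a = b
  · subst hab
    by_cases hcd : c = d
    · subst hcd
      by_cases hac : a = c
      · subst hac
        simp only [and_self, if_true, true_and]
        rw [← h4 a]; congr 1; funext ω; ring
      · have hrw : (∫ ω, f a ω * f a ω * f c ω * f c ω ∂ℙ)
            = ∫ ω, (f a ω * f a ω) * (f c ω * f c ω) ∂ℙ := by
          congr 1; funext ω; ring
        rw [hrw, pair_sqX hindep hmeas hL4 h2 hac]
        simp [hac, Ne.symm hac]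
    · by_cases hca : c = a
      · subst hca
        have hne : c ≠ d := hcd
        rw [zero_singletonX hindep hmeas hL4 hmean hne hne hne]
        simp [hcd]
      · have hrw : (∫ ω, f a ω * f a ω * f c ω * f d ω ∂ℙ)
            = ∫ ω, f a ω * f a ω * f d ω * f c ω ∂ℙ := by congr 1; funext ω; ring
        rw [hrw, zero_singletonX hindep hmeas hL4 hmean
          (fun h => hca h.symm) (fun h => hca h.symm) (Ne.symm hcd)]
        simp only [hcd, and_false, if_false, false_and]
        rw [if_neg (fun h => hca h.1.symm), if_neg (fun h => hca h.2.symm)]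
  · by_cases hac : a = c
    · subst hac
      by_cases hbd : b = d
      · subst hbd
        have hrw : (∫ ω, f a ω * f b ω * f a ω * f b ω ∂ℙ)
            = ∫ ω, (f a ω * f a ω) * (f b ω * f b ω) ∂ℙ := by congr 1; funext ω; ring
        rw [hrw, pair_sqX hindep hmeas hL4 h2 hab]
        simp [hab]
      · have hrw : (∫ ω, f a ω * f b ω * f a ω * f d ω ∂ℙ)
            = ∫ ω, f a ω * f a ω * f d ω * f b ω ∂ℙ := by congr 1; funext ω; ring
        rw [hrw, zero_singletonX hindep hmeas hL4 hmean
          hab hab (fun h => hbd h.symm)]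
        simp [hab, hbd, Ne.symm hab]
    · by_cases had : a = d
      · subst had
        by_cases hbc : b = c
        · subst hbc
          have hrw : (∫ ω, f a ω * f b ω * f b ω * f a ω ∂ℙ)
              = ∫ ω, (f a ω * f a ω) * (f b ω * f b ω) ∂ℙ := by congr 1; funext ω; ring
          rw [hrw, pair_sqX hindep hmeas hL4 h2 hab]
          simp [hab, hac]
        · have hrw : (∫ ω, f a ω * f b ω * f c ω * f a ω ∂ℙ)
              = ∫ ω, f a ω * f b ω * f a ω * f c ω ∂ℙ := by congr 1; funext ω; ring
          rw [hrw, zero_singletonX hindep hmeas hL4 hmean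
            hac (fun h => hbc h) hac]
          simp [hab, hac, hbc]
      · have hrw : (∫ ω, f a ω * f b ω * f c ω * f d ω ∂ℙ)
            = ∫ ω, f b ω * f c ω * f d ω * f a ω ∂ℙ := by congr 1; funext ω; ring
        rw [hrw, zero_singletonX hindep hmeas hL4 hmean
          (Ne.symm hab) (Ne.symm hac) (Ne.symm had)]
        simp [hab, hac, had]

end MomentAux

private lemma sum4_reorderX {m p : ℕ} (g : Fin m → Fin m → Fin p → Fin p → ℝ) :
    ∑ d, ∑ l, ∑ c, ∑ k, g k l c d = ∑ k, ∑ l, ∑ c, ∑ d, g k l c d := by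
  calc ∑ d, ∑ l, ∑ c, ∑ k, g k l c d
      = ∑ d, ∑ l, ∑ k, ∑ c, g k l c d := by
        exact Finset.sum_congr rfl fun d _ => Finset.sum_congr rfl fun l _ => Finset.sum_comm
    _ = ∑ d, ∑ k, ∑ l, ∑ c, g k l c d := by
        exact Finset.sum_congr rfl fun d _ => Finset.sum_comm
    _ = ∑ k, ∑ d, ∑ l, ∑ c, g k l c d := Finset.sum_comm
    _ = ∑ k, ∑ l, ∑ d, ∑ c, g k l c d := by
        exact Finset.sum_congr rfl fun k _ => Finset.sum_comm
    _ = ∑ k, ∑ l, ∑ c, ∑ d, g k l c d := by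
        exact Finset.sum_congr rfl fun k _ => Finset.sum_congr rfl fun l _ => Finset.sum_comm

set_option linter.unnecessarySeqFocus false in
set_option linter.unreachableTactic false in
set_option linter.unusedTactic false in
private lemma WdiagX {p : ℕ} (a : Fin p) (x : Fin p → ℝ) (μ2 μ4 : ℝ) :
    ∑ c, ∑ d, (x c * x d) *
      (if a = c ∧ c = d ∧ d = a then μ4
       else if a = c ∧ d = a then μ2 ^ 2
       else if a = d ∧ c = a then μ2 ^ 2
       else if a = a ∧ c = d then μ2 ^ 2
       else 0)
    = x a ^ 2 * (μ4 - μ2 ^ 2) + μ2 ^ 2 * ∑ c, x c ^ 2 := by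
  have hpt : ∀ c d : Fin p, (x c * x d) *
      (if a = c ∧ c = d ∧ d = a then μ4
       else if a = c ∧ d = a then μ2 ^ 2
       else if a = d ∧ c = a then μ2 ^ 2
       else if a = a ∧ c = d then μ2 ^ 2
       else 0)
      = (if c = a ∧ d = a then (x c * x d) * (μ4 - μ2 ^ 2) else 0)
        + (if c = d then (x c * x d) * μ2 ^ 2 else 0) := by
    intro c d
    by_cases hc : c = a <;> by_cases hd : d = a <;> by_cases hcd : c = d <;>
      simp_all [eq_comm] <;> ring
  rw [Finset.sum_congr rfl fun c _ => Finset.sum_congr rfl fun d _ => hpt c d]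
  simp only [Finset.sum_add_distrib]
  have h1 : ∀ c : Fin p, ∑ d, (if c = a ∧ d = a then (x c * x d) * (μ4 - μ2 ^ 2) else 0)
      = if c = a then (x c * x a) * (μ4 - μ2 ^ 2) else 0 := by
    intro c
    by_cases hc : c = a
    · simp [hc, Finset.sum_ite_eq']
    · simp [hc]
  have h2 : ∀ c : Fin p, ∑ d, (if c = d then (x c * x d) * μ2 ^ 2 else 0)
      = (x c * x c) * μ2 ^ 2 := by
    intro c; rw [Finset.sum_ite_eq]; simp
  rw [Finset.sum_congr rfl fun c _ => h1 c, Finset.sum_congr rfl fun c _ => h2 c,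
    Finset.sum_ite_eq']
  have h3 : ∑ c : Fin p, x c * x c * μ2 ^ 2 = μ2 ^ 2 * ∑ c, x c ^ 2 := by
    rw [Finset.mul_sum]; exact Finset.sum_congr rfl fun c _ => by ring
  rw [h3, if_pos (Finset.mem_univ a)]
  ring

set_option linter.unnecessarySeqFocus false in
set_option linter.unreachableTactic false in
set_option linter.unusedTactic false in
private lemma WoffX {p : ℕ} (a b : Fin p) (hab : a ≠ b) (x : Fin p → ℝ) (μ2 μ4 : ℝ) :
    ∑ c, ∑ d, (x c * x d) *
      (if a = c ∧ c = d ∧ d = b then μ4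
       else if a = c ∧ d = b then μ2 ^ 2
       else if a = d ∧ c = b then μ2 ^ 2
       else if a = b ∧ c = d then μ2 ^ 2
       else 0)
    = 2 * μ2 ^ 2 * (x a * x b) := by
  have hpt : ∀ c d : Fin p, (x c * x d) *
      (if a = c ∧ c = d ∧ d = b then μ4
       else if a = c ∧ d = b then μ2 ^ 2
       else if a = d ∧ c = b then μ2 ^ 2
       else if a = b ∧ c = d then μ2 ^ 2
       else 0)
      = (if c = a ∧ d = b then (x c * x d) * μ2 ^ 2 else 0)
        + (if c = b ∧ d = a then (x c * x d) * μ2 ^ 2 else 0) := by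
    intro c d
    by_cases h1 : c = a <;> by_cases h2 : d = b <;> by_cases h3 : c = b <;>
      by_cases h4 : d = a <;> by_cases h5 : c = d <;>
      simp_all [eq_comm] <;> ring
  rw [Finset.sum_congr rfl fun c _ => Finset.sum_congr rfl fun d _ => hpt c d]
  simp only [Finset.sum_add_distrib]
  have h1 : ∀ c : Fin p, ∑ d, (if c = a ∧ d = b then (x c * x d) * μ2 ^ 2 else 0)
      = if c = a then (x c * x b) * μ2 ^ 2 else 0 := by
    intro c; by_cases hc : c = a
    · simp [hc, Finset.sum_ite_eq']
    · simp [hc]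
  have h2 : ∀ c : Fin p, ∑ d, (if c = b ∧ d = a then (x c * x d) * μ2 ^ 2 else 0)
      = if c = b then (x c * x a) * μ2 ^ 2 else 0 := by
    intro c; by_cases hc : c = b
    · simp [hc, Finset.sum_ite_eq']
    · simp [hc]
  rw [Finset.sum_congr rfl fun c _ => h1 c, Finset.sum_congr rfl fun c _ => h2 c,
    Finset.sum_ite_eq', Finset.sum_ite_eq', if_pos (Finset.mem_univ a),
    if_pos (Finset.mem_univ b)]
  ring

set_option maxHeartbeats 1000000 in

/-- For a `p × m` random matrix `R` with i.i.d. mean-zero entries with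
second moment `μ2 > 0`, fourth moment `μ4`, kurtosis `κ = μ4/μ2² − 3`, and any fixed
`x ∈ ℝ^p`,
`E[R Rᵀ x xᵀ R Rᵀ] = (m² + m) μ2² x xᵀ + κ m μ2² diag(x xᵀ) + m μ2² ‖x‖² I`. -/
theorem expectation_RRt_xxt_RRt
    {Ω : Type*} [MeasureSpace Ω] [IsProbabilityMeasure (ℙ : Measure Ω)]
    {p m : ℕ} (R : Ω → Matrix (Fin p) (Fin m) ℝ)
    (hmeas : ∀ i j, Measurable (fun ω => R ω i j))
    (hindep : iIndepFun
      (fun (q : Fin p × Fin m) ω => R ω q.1 q.2) ℙ)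
    (hid : ∀ i j i' j', IdentDistrib (fun ω => R ω i j) (fun ω => R ω i' j') ℙ ℙ)
    (hL4 : ∀ i j, MemLp (fun ω => R ω i j) 4 ℙ)
    (μ2 μ4 κ : ℝ) (hμ2 : 0 < μ2) (hκ : κ = μ4 / μ2 ^ 2 - 3)
    (hmean : ∀ i j, ∫ ω, R ω i j ∂ℙ = 0)
    (h2 : ∀ i j, ∫ ω, (R ω i j) ^ 2 ∂ℙ = μ2)
    (h4 : ∀ i j, ∫ ω, (R ω i j) ^ 4 ∂ℙ = μ4)
    (x : Fin p → ℝ) :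
    (Matrix.of fun i j =>
        ∫ ω, (R ω * (R ω)ᵀ * Matrix.vecMulVec x x * (R ω * (R ω)ᵀ)) i j ∂ℙ)
      = (((m : ℝ) ^ 2 + m) * μ2 ^ 2) • Matrix.vecMulVec x x
        + (κ * m * μ2 ^ 2) • Matrix.diagonal (fun i => x i ^ 2)
        + ((m : ℝ) * μ2 ^ 2 * ∑ i, x i ^ 2) • (1 : Matrix (Fin p) (Fin p) ℝ) := by
  classical
  have hmeas' : ∀ q : Fin p × Fin m, Measurable (fun ω => R ω q.1 q.2) :=
    fun q => hmeas q.1 q.2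
  have hL4' : ∀ q : Fin p × Fin m, MemLp (fun ω => R ω q.1 q.2) 4 ℙ :=
    fun q => hL4 q.1 q.2
  have hmean' : ∀ q : Fin p × Fin m, ∫ ω, R ω q.1 q.2 ∂ℙ = 0 := fun q => hmean q.1 q.2
  have h2' : ∀ q : Fin p × Fin m, ∫ ω, (R ω q.1 q.2) ^ 2 ∂ℙ = μ2 := fun q => h2 q.1 q.2
  have h4' : ∀ q : Fin p × Fin m, ∫ ω, (R ω q.1 q.2) ^ 4 ∂ℙ = μ4 := fun q => h4 q.1 q.2
  ext a b
  have hT : ∀ (k l : Fin m) (c d : Fin p),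
      (∫ ω, R ω a k * R ω c k * R ω d l * R ω b l ∂ℙ) =
        if k = l then
          (if a = c ∧ c = d ∧ d = b then μ4
           else if a = c ∧ d = b then μ2 ^ 2
           else if a = d ∧ c = b then μ2 ^ 2
           else if a = b ∧ c = d then μ2 ^ 2
           else 0)
        else (if a = c ∧ d = b then μ2 ^ 2 else 0) := by
    intro k l c d
    have h := four_momentX hindep hmeas' hL4' hmean' h2' h4' (a,k) (c,k) (d,l) (b,l)
    rw [show (∫ ω, R ω a k * R ω c k * R ω d l * R ω b l ∂ℙ)
        = ∫ ω, (fun ω => R ω (a,k).1 (a,k).2) ω * (fun ω => R ω (c,k).1 (c,k).2) ω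
            * (fun ω => R ω (d,l).1 (d,l).2) ω * (fun ω => R ω (b,l).1 (b,l).2) ω ∂ℙ
        from rfl, h]
    by_cases hkl : k = l
    · subst hkl
      simp only [Prod.mk.injEq, and_true, true_and, if_true, eq_self_iff_true]
    · simp only [Prod.mk.injEq, hkl, and_true, true_and, and_false, false_and, if_false]
  have hexp : ∀ ω, (R ω * (R ω)ᵀ * Matrix.vecMulVec x x * (R ω * (R ω)ᵀ)) a b
      = ∑ d, ∑ l, ∑ c, ∑ k, (x c * x d) * (R ω a k * R ω c k * R ω d l * R ω b l) := by
    intro ω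
    simp only [Matrix.mul_apply, Matrix.transpose_apply, Matrix.vecMulVec_apply,
      Finset.sum_mul, Finset.mul_sum]
    refine Finset.sum_congr rfl fun d _ => Finset.sum_congr rfl fun l _ =>
      Finset.sum_congr rfl fun c _ => Finset.sum_congr rfl fun k _ => by ring
  have hint4 : ∀ (k l : Fin m) (c d : Fin p),
      Integrable (fun ω => (x c * x d) * (R ω a k * R ω c k * R ω d l * R ω b l)) ℙ := by
    intro k l c d
    exact (integrable_mul4X hL4' (a,k) (c,k) (d,l) (b,l)).const_mul _
  have hswap : (∫ ω, (R ω * (R ω)ᵀ * Matrix.vecMulVec x x * (R ω * (R ω)ᵀ)) a b ∂ℙ)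
      = ∑ d, ∑ l, ∑ c, ∑ k, (x c * x d)
          * (∫ ω, R ω a k * R ω c k * R ω d l * R ω b l ∂ℙ) := by
    rw [integral_congr_ae (Filter.Eventually.of_forall hexp)]
    rw [integral_finset_sum _ (fun d _ => integrable_finset_sum _ (fun l _ =>
      integrable_finset_sum _ (fun c _ => integrable_finset_sum _ (fun k _ =>
        hint4 k l c d))))]
    refine Finset.sum_congr rfl fun d _ => ?_
    rw [integral_finset_sum _ (fun l _ => integrable_finset_sum _ (fun c _ =>
      integrable_finset_sum _ (fun k _ => hint4 k l c d)))]
    refine Finset.sum_congr rfl fun l _ => ?_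
    rw [integral_finset_sum _ (fun c _ => integrable_finset_sum _ (fun k _ =>
      hint4 k l c d))]
    refine Finset.sum_congr rfl fun c _ => ?_
    rw [integral_finset_sum _ (fun k _ => hint4 k l c d)]
    refine Finset.sum_congr rfl fun k _ => ?_
    exact integral_const_mul _ _
  rw [Matrix.of_apply, hswap]
  rw [Finset.sum_congr rfl fun d _ => Finset.sum_congr rfl fun l _ =>
    Finset.sum_congr rfl fun c _ => Finset.sum_congr rfl fun k _ => by rw [hT k l c d]]
  rw [sum4_reorderX (fun k l c d => (x c * x d) *
    (if k = l then
      (if a = c ∧ c = d ∧ d = b then μ4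
       else if a = c ∧ d = b then μ2 ^ 2
       else if a = d ∧ c = b then μ2 ^ 2
       else if a = b ∧ c = d then μ2 ^ 2
       else 0)
     else (if a = c ∧ d = b then μ2 ^ 2 else 0)))]
  set W : ℝ := ∑ c, ∑ d, (x c * x d) *
      (if a = c ∧ c = d ∧ d = b then μ4
       else if a = c ∧ d = b then μ2 ^ 2
       else if a = d ∧ c = b then μ2 ^ 2
       else if a = b ∧ c = d then μ2 ^ 2
       else 0) with hWdef
  have hoffsum : ∀ (k l : Fin m), k ≠ l →
      (∑ c, ∑ d, (x c * x d) *
        (if k = l then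
          (if a = c ∧ c = d ∧ d = b then μ4
           else if a = c ∧ d = b then μ2 ^ 2
           else if a = d ∧ c = b then μ2 ^ 2
           else if a = b ∧ c = d then μ2 ^ 2
           else 0)
         else (if a = c ∧ d = b then μ2 ^ 2 else 0)))
      = μ2 ^ 2 * (x a * x b) := by
    intro k l hkl
    simp only [if_neg hkl]
    have h1 : ∀ c : Fin p, ∑ d, (x c * x d) * (if a = c ∧ d = b then μ2 ^ 2 else 0)
        = if a = c then (x c * x b) * μ2 ^ 2 else 0 := by
      intro c
      by_cases hac : a = c
      · simp [hac, mul_ite, Finset.sum_ite_eq']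
      · simp [hac]
    rw [Finset.sum_congr rfl fun c _ => h1 c, Finset.sum_ite_eq,
      if_pos (Finset.mem_univ a)]
    ring
  have hinner : ∀ k : Fin m,
      (∑ l, ∑ c, ∑ d, (x c * x d) *
        (if k = l then
          (if a = c ∧ c = d ∧ d = b then μ4
           else if a = c ∧ d = b then μ2 ^ 2
           else if a = d ∧ c = b then μ2 ^ 2
           else if a = b ∧ c = d then μ2 ^ 2
           else 0)
         else (if a = c ∧ d = b then μ2 ^ 2 else 0)))
      = W + ((m : ℝ) - 1) * (μ2 ^ 2 * (x a * x b)) := by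
    intro k
    rw [← Finset.add_sum_erase _ _ (Finset.mem_univ k)]
    congr 1
    · simp only [eq_self_iff_true, if_true]
      rfl
    · rw [Finset.sum_congr rfl (fun l hl => hoffsum k l
        (Ne.symm (Finset.ne_of_mem_erase hl)))]
      rw [Finset.sum_const, Finset.card_erase_of_mem (Finset.mem_univ k),
        Finset.card_univ, Fintype.card_fin, nsmul_eq_mul,
        Nat.cast_sub (Nat.one_le_iff_ne_zero.mpr (Nat.pos_iff_ne_zero.mp k.pos))]
      norm_num
  rw [Finset.sum_congr rfl fun k _ => hinner k, Finset.sum_const,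
    Finset.card_univ, Fintype.card_fin, nsmul_eq_mul]
  -- RHS entry
  simp only [Matrix.add_apply, Matrix.smul_apply, Matrix.vecMulVec_apply,
    Matrix.diagonal_apply, Matrix.one_apply, smul_eq_mul]
  by_cases hab : a = b
  · subst hab
    have hWval : W = x a ^ 2 * (μ4 - μ2 ^ 2) + μ2 ^ 2 * ∑ c, x c ^ 2 := by
      rw [hWdef]; exact WdiagX a x μ2 μ4
    rw [hWval, hκ, if_pos rfl, if_pos rfl]
    field_simp
    ring
  · have hWval : W = 2 * μ2 ^ 2 * (x a * x b) := by
      rw [hWdef]; exact WoffX a b hab x μ2 μ4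
    rw [hWval, if_neg hab, if_neg hab]
    ring
end

section
/- Let Ĉ be a p × p random matrix with E[Ĉ] = C + (κ/(m+1)) diag(C) + (1/(m+1)) tr(C) I for a fixed p × p matrix C, where m ≥ 1 and κ > −(m+1). Define α₁ = (κ/(m+1))/(1 + κ/(m+1)) and α₂ = 1/((1 + κ/(m+1))(m + 1 + κ + p)), and Σ̂ = Ĉ − α₁ diag(Ĉ) − α₂ tr(Ĉ) I. Then E[Σ̂] = C, i.e., Σ̂ is an unbiased estimator of C. -/
open MeasureTheory ProbabilityTheory Matrix

/-- debiasing the compressive covariance estimator. If `Ĉ` has entrywise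
expectation `C + (κ/(m+1)) diag(C) + (1/(m+1)) tr(C) I`, then with
`α₁ = (κ/(m+1))/(1 + κ/(m+1))` and `α₂ = 1/((1 + κ/(m+1))(m + 1 + κ + p))`, the matrix
`Σ̂ = Ĉ − α₁ diag(Ĉ) − α₂ tr(Ĉ) I` is an unbiased estimator of `C`: `E[Σ̂] = C`. -/
theorem unbiased_compressive_covariance_estimator
    {Ω : Type*} [MeasureSpace Ω] [IsProbabilityMeasure (ℙ : Measure Ω)]
    {p : ℕ} (m : ℕ) (hm : 1 ≤ m) (κ : ℝ) (hκ : -((m : ℝ) + 1) < κ)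
    (C : Matrix (Fin p) (Fin p) ℝ)
    (Chat : Ω → Matrix (Fin p) (Fin p) ℝ)
    (hInt : ∀ i j, Integrable (fun ω => Chat ω i j) ℙ)
    (hexp : (Matrix.of fun i j => ∫ ω, Chat ω i j ∂ℙ)
      = C + (κ / (m + 1)) • Matrix.diagonal (fun i => C i i)
        + ((m + 1 : ℝ)⁻¹ * Matrix.trace C) • (1 : Matrix (Fin p) (Fin p) ℝ))
    (α₁ α₂ : ℝ)
    (hα₁ : α₁ = (κ / (m + 1)) / (1 + κ / (m + 1)))
    (hα₂ : α₂ = 1 / ((1 + κ / (m + 1)) * ((m : ℝ) + 1 + κ + p)))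
    (Sigmahat : Ω → Matrix (Fin p) (Fin p) ℝ)
    (hSigma : ∀ ω, Sigmahat ω = Chat ω - α₁ • Matrix.diagonal (fun a => Chat ω a a)
        - (α₂ * Matrix.trace (Chat ω)) • (1 : Matrix (Fin p) (Fin p) ℝ)) :
    (Matrix.of fun i j => ∫ ω, Sigmahat ω i j ∂ℙ) = C := by

  have hm1 : (0:ℝ) < (m:ℝ) + 1 := by positivity
  have hd : (0:ℝ) < 1 + κ / ((m:ℝ) + 1) := by
    have h1 : (-1:ℝ) < κ / ((m:ℝ) + 1) := by
      rw [lt_div_iff₀ hm1]; linarith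
    linarith
  have hp0 : (0:ℝ) ≤ (p:ℝ) := Nat.cast_nonneg p
  have hs : (0:ℝ) < (m:ℝ) + 1 + κ + p := by linarith
  set d : ℝ := κ / ((m:ℝ) + 1) with hdDef
  -- entrywise expectation of Chat
  have hE : ∀ i j, ∫ ω, Chat ω i j ∂ℙ
      = C i j + d * (if i = j then C i i else 0)
        + ((m + 1 : ℝ)⁻¹ * Matrix.trace C) * (if i = j then 1 else 0) := by
    intro i j
    have h := congrFun (congrFun hexp i) j
    simpa [Matrix.add_apply, Matrix.smul_apply, Matrix.diagonal_apply,
      Matrix.one_apply, smul_eq_mul] using h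
  have hEd : ∀ i, ∫ ω, Chat ω i i ∂ℙ
      = (1 + d) * C i i + (m + 1 : ℝ)⁻¹ * Matrix.trace C := by
    intro i; rw [hE i i]; simp; ring
  have hTrInt : Integrable (fun ω => Matrix.trace (Chat ω)) ℙ := by
    simp only [Matrix.trace, Matrix.diag]
    exact integrable_finset_sum _ fun a _ => hInt a a
  have hETr : ∫ ω, Matrix.trace (Chat ω) ∂ℙ
      = (1 + d + (p:ℝ) * (m + 1 : ℝ)⁻¹) * Matrix.trace C := by
    simp only [Matrix.trace, Matrix.diag]
    rw [integral_finset_sum _ fun a _ => hInt a a]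
    simp only [hEd]
    rw [Finset.sum_add_distrib, ← Finset.mul_sum]
    simp [Finset.card_univ, Matrix.trace, Matrix.diag]
    ring
  ext i j
  have hfun : (fun ω => Sigmahat ω i j)
      = fun ω => Chat ω i j - α₁ * (if i = j then Chat ω i i else 0)
        - α₂ * Matrix.trace (Chat ω) * (if i = j then 1 else 0) := by
    funext ω
    rw [hSigma ω]
    simp [Matrix.sub_apply, Matrix.smul_apply, Matrix.diagonal_apply,
      Matrix.one_apply, smul_eq_mul]
  have hIntDiag : Integrable (fun ω => α₁ * (if i = j then Chat ω i i else 0)) ℙ := by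
    by_cases h : i = j
    · simpa [h] using (hInt j j).const_mul α₁
    · simp [h]
  have hIntTr : Integrable (fun ω => α₂ * Matrix.trace (Chat ω) * (if i = j then 1 else 0)) ℙ := by
    by_cases h : i = j
    · simpa [h, mul_comm] using hTrInt.const_mul α₂
    · simp [h]
  simp only [Matrix.of_apply, hfun]
  have hA : Integrable (fun ω => Chat ω i j - α₁ * (if i = j then Chat ω i i else 0)) ℙ :=
    (hInt i j).sub hIntDiag
  rw [integral_sub hA hIntTr, integral_sub (hInt i j) hIntDiag]
  by_cases h : i = j
  · subst h
    simp only [if_true, mul_one]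
    have h1 : (∫ a, α₁ * Chat a i i ∂ℙ) = α₁ * ∫ a, Chat a i i ∂ℙ := integral_const_mul α₁ _
    have h2 : (∫ a, α₂ * Matrix.trace (Chat a) ∂ℙ) = α₂ * ∫ a, Matrix.trace (Chat a) ∂ℙ :=
      integral_const_mul α₂ _
    rw [h1, h2, hETr, hEd]
    rw [hα₁, hα₂]
    have h1 : 1 + d ≠ 0 := ne_of_gt hd
    have h2 : (m:ℝ) + 1 + κ + p ≠ 0 := ne_of_gt hs
    have h3 : (m:ℝ) + 1 ≠ 0 := ne_of_gt hm1
    have hκd : κ = d * ((m:ℝ) + 1) := by rw [hdDef]; field_simp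
    rw [hκd] at h2 ⊢
    field_simp
    ring
  · simp only [if_neg h, mul_zero, integral_zero, mul_zero, sub_zero]
    rw [hE i j]
    simp [h]
end
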